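/- arXiv:1111.2743 — 3 statements merged into one kernel-verified Lean document; each statement's English description precedes it below -/
import Mathlib

section
/- There is an absolute constant C such that for all integers n ≥ 1, all γ > 0 and all intervals I ⊆ [0,2π), the quantity E = (1/2) ∫∫_Ω ( Kₙ(0)·Kₙ(0) − Kₙ(u−t)·Kₙ(t−u) ) du dt, where Ω = {(u,t) ∈ ℝ² : (u+t)/2 ∈ I and |u−t| < γ}, satisfies | E − |I|·γ³·n⁴/(144π²) | ≤ C · (|I|·γ³·n⁴/(144π²)) · ( n⁻¹ + γ²n² + (γ²n²)³ ). -/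
open MeasureTheory Filter Topology Real

-- FTC-based ladder bound
lemma ftc_ladder {f f' : ℝ → ℝ} {c : ℝ} {k : ℕ}
    (hd : ∀ t, HasDerivAt f (f' t) t) (hc : Continuous f') (h0 : f 0 = 0)
    (hb : ∀ t, |f' t| ≤ c * |t| ^ k) (x : ℝ) :
    |f x| ≤ c * |x| ^ (k + 1) / (k + 1) := by
  have hcnn : 0 ≤ c := by
    have := hb 1
    simpa using this.trans' (abs_nonneg _)
  have hint : ∀ a b : ℝ, IntervalIntegrable f' volume a b :=
    fun a b => hc.intervalIntegrable a b
  have hftc : ∀ y : ℝ, f y = ∫ t in (0:ℝ)..y, f' t := by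
    intro y
    rw [intervalIntegral.integral_eq_sub_of_hasDerivAt (fun t _ => hd t) (hint 0 y), h0, sub_zero]
  rcases le_or_gt 0 x with hx | hx
  · rw [hftc x]
    calc |∫ t in (0:ℝ)..x, f' t| ≤ ∫ t in (0:ℝ)..x, |f' t| :=
          intervalIntegral.abs_integral_le_integral_abs hx
      _ ≤ ∫ t in (0:ℝ)..x, c * t ^ k := by
          apply intervalIntegral.integral_mono_on hx (hint 0 x).abs
          · exact (Continuous.intervalIntegrable (by continuity) 0 x)
          · intro t ht
            have : |t| = t := abs_of_nonneg ht.1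
            simpa [this] using hb t
      _ = c * x ^ (k+1) / (k+1) := by
          rw [intervalIntegral.integral_const_mul, integral_pow]
          push_cast; ring
      _ = c * |x| ^ (k+1) / (k+1) := by rw [abs_of_nonneg hx]
  · rw [hftc x, intervalIntegral.integral_symm, abs_neg]
    calc |∫ t in x..(0:ℝ), f' t| ≤ ∫ t in x..(0:ℝ), |f' t| :=
          intervalIntegral.abs_integral_le_integral_abs hx.le
      _ ≤ ∫ t in x..(0:ℝ), c * (-t) ^ k := by
          apply intervalIntegral.integral_mono_on hx.le (hint x 0).abs
          · exact (Continuous.intervalIntegrable (by continuity) x 0)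
          · intro t ht
            have : |t| = -t := abs_of_nonpos ht.2
            simpa [this] using hb t
      _ = ∫ t in (0:ℝ)..(-x), c * t ^ k := by
          rw [intervalIntegral.integral_comp_neg (fun t => c * t ^ k)]
          norm_num
      _ = c * (-x) ^ (k+1) / (k+1) := by
          rw [intervalIntegral.integral_const_mul, integral_pow]
          push_cast; ring
      _ = c * |x| ^ (k+1) / (k+1) := by rw [abs_of_neg hx]
lemma sub_sin_bound (x : ℝ) : |x - Real.sin x| ≤ 1/6 * |x| ^ 3 := by
  have h := ftc_ladder (f := fun t => t - Real.sin t) (f' := fun t => 1 - Real.cos t)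
    (c := 1/2) (k := 2)
    (fun t => (hasDerivAt_id t).sub (Real.hasDerivAt_sin t))
    (by continuity) (by simp)
    (fun t => by
      show |1 - Real.cos t| ≤ 1/2 * |t| ^ 2
      have h2 := Real.one_sub_sq_div_two_le_cos (x := t)
      rw [abs_of_nonneg (by linarith [Real.cos_le_one t]), sq_abs]
      linarith) x
  norm_num at h
  linarith

lemma cos_taylor4 (x : ℝ) : |Real.cos x - (1 - x^2/2)| ≤ 1/24 * |x| ^ 4 := by
  have h := ftc_ladder (f := fun t => Real.cos t - (1 - t^2/2)) (f' := fun t => t - Real.sin t)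
    (c := 1/6) (k := 3)
    (fun t => by
      have h := (Real.hasDerivAt_cos t).sub (((hasDerivAt_pow 2 t).div_const 2).const_sub 1)
      refine h.congr_deriv ?_
      norm_num
      ring)
    (by continuity) (by norm_num)
    (fun t => sub_sin_bound t) x
  norm_num at h
  linarith

lemma sin_taylor5 (x : ℝ) : |Real.sin x - (x - x^3/6)| ≤ 1/120 * |x| ^ 5 := by
  have h := ftc_ladder (f := fun t => Real.sin t - (t - t^3/6)) (f' := fun t => Real.cos t - (1 - t^2/2))
    (c := 1/24) (k := 4)
    (fun t => by
      have h := (Real.hasDerivAt_sin t).sub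
        ((hasDerivAt_id t).sub ((hasDerivAt_pow 3 t).div_const 6))
      refine h.congr_deriv ?_
      norm_num
      ring)
    (by continuity) (by norm_num)
    (fun t => cos_taylor4 t) x
  norm_num at h
  linarith

lemma sum_id' (n : ℕ) : ∑ j ∈ Finset.range n, (j:ℝ) = n*(n-1)/2 := by
  induction n with
  | zero => simp
  | succ m ih => rw [Finset.sum_range_succ, ih]; push_cast; ring

lemma sum_sq' (n : ℕ) : ∑ j ∈ Finset.range n, (j:ℝ)^2 = n*(n-1)*(2*n-1)/6 := by
  induction n with
  | zero => simp
  | succ m ih => rw [Finset.sum_range_succ, ih]; push_cast; ring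

lemma sum_sq_diff (n : ℕ) :
    ∑ j ∈ Finset.range n, ∑ k ∈ Finset.range n, ((j:ℝ)-(k:ℝ))^2 = n^2*(n^2-1)/6 := by
  have h : ∀ j ∈ Finset.range n, ∑ k ∈ Finset.range n, ((j:ℝ)-(k:ℝ))^2
      = n*(j:ℝ)^2 - (n*(n-1))*(j:ℝ) + n*(n-1)*(2*n-1)/6 := by
    intro j _
    have expand : ∀ k : ℕ, ((j:ℝ)-(k:ℝ))^2 = (j:ℝ)^2 - 2*(j:ℝ)*(k:ℝ) + (k:ℝ)^2 :=
      fun k => by ring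
    simp only [expand]
    rw [Finset.sum_add_distrib, Finset.sum_sub_distrib, Finset.sum_const, ← Finset.mul_sum,
      sum_id', sum_sq', Finset.card_range, nsmul_eq_mul]
    ring
  rw [Finset.sum_congr rfl h, Finset.sum_add_distrib, Finset.sum_sub_distrib,
    ← Finset.mul_sum, ← Finset.mul_sum, sum_id', sum_sq', Finset.sum_const,
    Finset.card_range, nsmul_eq_mul]
  ring

noncomputable def phiL : (ℝ × ℝ) →ₗ[ℝ] (ℝ × ℝ) :=
  Matrix.toLin (Module.Basis.finTwoProd ℝ) (Module.Basis.finTwoProd ℝ) !![1/2, 1/2; 1, -1]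

lemma phiL_apply (p : ℝ × ℝ) : phiL p = ((p.1 + p.2)/2, p.1 - p.2) := by
  rw [phiL, Matrix.toLin_finTwoProd_apply]
  norm_num
  constructor <;> ring

lemma phiL_det : LinearMap.det phiL = -1 := by
  rw [phiL, LinearMap.det_toLin]
  simp [Matrix.det_fin_two_of]
  norm_num

lemma phi_measurePreserving :
    MeasurePreserving (fun p : ℝ × ℝ => ((p.1 + p.2)/2, p.1 - p.2)) volume volume := by
  have hdet : LinearMap.det phiL ≠ 0 := by rw [phiL_det]; norm_num
  have hmap := Measure.map_linearMap_addHaar_eq_smul_addHaar (volume : Measure (ℝ × ℝ)) hdet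
  rw [phiL_det] at hmap
  norm_num at hmap
  have hco : ⇑phiL = fun p : ℝ × ℝ => ((p.1 + p.2)/2, p.1 - p.2) := funext phiL_apply
  rw [hco] at hmap
  exact ⟨by fun_prop, hmap⟩

noncomputable def phiH : (ℝ × ℝ) ≃ₜ (ℝ × ℝ) where
  toFun p := ((p.1 + p.2)/2, p.1 - p.2)
  invFun q := (q.1 + q.2/2, q.1 - q.2/2)
  left_inv p := by ext <;> dsimp <;> ring
  right_inv q := by ext <;> dsimp <;> ring
  continuous_toFun := by fun_prop
  continuous_invFun := by fun_prop

-- reduction of the set integral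
lemma omega_integral (a b γ : ℝ) (F : ℝ → ℂ) (hF : Continuous F) :
    ∫ p in {p : ℝ × ℝ | (p.1 + p.2) / 2 ∈ Set.Ico a b ∧ |p.1 - p.2| < γ}, F (p.1 - p.2)
      = (volume (Set.Ico a b)).toReal • ∫ v in Set.Ioo (-γ) γ, F v := by
  have hset : {p : ℝ × ℝ | (p.1 + p.2) / 2 ∈ Set.Ico a b ∧ |p.1 - p.2| < γ}
      = (fun p : ℝ × ℝ => ((p.1 + p.2)/2, p.1 - p.2)) ⁻¹' (Set.Ico a b ×ˢ Set.Ioo (-γ) γ) := by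
    ext p
    simp [abs_lt, Set.mem_Ico, and_assoc]
  rw [hset]
  have := phi_measurePreserving.setIntegral_preimage_emb
    (phiH.measurableEmbedding) (fun q : ℝ × ℝ => F q.2) (Set.Ico a b ×ˢ Set.Ioo (-γ) γ)
  rw [this]
  have h2 : ∫ q in Set.Ico a b ×ˢ Set.Ioo (-γ) γ, F q.2
      = (∫ x in Set.Ico a b, (1:ℂ)) * ∫ v in Set.Ioo (-γ) γ, F v := by
    rw [Measure.volume_eq_prod, ← MeasureTheory.setIntegral_prod_mul (fun _ => (1:ℂ)) F]
    simp
  rw [h2, setIntegral_const]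
  simp [smul_smul]
  left; exact (ENNReal.toReal_ofReal' ).symm

lemma term_integral (γ : ℝ) (hγ : 0 < γ) (m : ℝ) :
    ∫ v in Set.Ioo (-γ) γ, ((1:ℂ) - Complex.exp ((m:ℂ) * (v:ℂ) * Complex.I))
      = ((if m = 0 then (0:ℝ) else 2*γ - 2*Real.sin (m*γ)/m : ℝ) : ℂ) := by
  have hle : -γ ≤ γ := by linarith
  rw [← MeasureTheory.integral_Ioc_eq_integral_Ioo, ← intervalIntegral.integral_of_le hle]
  rcases eq_or_ne m 0 with hm | hm
  · simp [hm]
  · have hc : (m:ℂ) * Complex.I ≠ 0 := by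
      simp [Complex.ofReal_eq_zero, hm, Complex.I_ne_zero]
    have hsplit : ∫ v in (-γ)..γ, ((1:ℂ) - Complex.exp ((m:ℂ) * (v:ℂ) * Complex.I))
        = (∫ v in (-γ)..γ, (1:ℂ)) - ∫ v in (-γ)..γ, Complex.exp (((m:ℂ) * Complex.I) * (v:ℂ)) := by
      rw [← intervalIntegral.integral_sub intervalIntegrable_const]
      · congr 1; funext v; ring_nf
      · apply Continuous.intervalIntegrable; fun_prop
    rw [hsplit, integral_exp_mul_complex hc, intervalIntegral.integral_const]
    have hsin : Complex.exp ((m:ℂ) * Complex.I * (γ:ℂ)) - Complex.exp ((m:ℂ) * Complex.I * ((-γ:ℝ):ℂ))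
        = 2 * Complex.sin ((m*γ:ℝ):ℂ) * Complex.I := by
      rw [Complex.sin]
      push_cast
      ring_nf
      rw [Complex.I_sq]
      ring
    rw [hsin, if_neg hm, mul_div_mul_right _ _ Complex.I_ne_zero]
    have hmc : (m:ℂ) ≠ 0 := by exact_mod_cast hm
    push_cast
    rw [Complex.real_smul]
    push_cast
    field_simp
    ring

lemma core_ineq {γ : ℝ} (hγ : 0 < γ) {x : ℝ} (hn1 : (1:ℝ) ≤ x) :
    x^6*γ^5/60 + γ^3*x^2/18 ≤ (200/18)*γ^3*(x^3 + γ^2*x^6 + γ^6*x^10) := by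
  have h23 : x^2 ≤ x^3 := by nlinarith
  have f1 : γ^3*x^2 ≤ γ^3*x^3 := mul_le_mul_of_nonneg_left h23 (pow_pos hγ 3).le
  have f2 : (0:ℝ) ≤ γ^3*(γ^6*x^10) :=
    mul_nonneg (pow_pos hγ 3).le (mul_nonneg (pow_pos hγ 6).le (by positivity))
  have f3 : γ^5*x^6 = γ^3*(γ^2*x^6) := by ring
  have f4 : (0:ℝ) ≤ γ^3*(γ^2*x^6) :=
    mul_nonneg (pow_pos hγ 3).le (mul_nonneg (pow_pos hγ 2).le (by positivity))
  have f5 : (0:ℝ) ≤ γ^3*x^2 := mul_nonneg (pow_pos hγ 3).le (by positivity)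
  have hexp : (200/18)*γ^3*(x^3+γ^2*x^6+γ^6*x^10)
      = (200/18)*(γ^3*x^3) + (200/18)*(γ^3*(γ^2*x^6)) + (200/18)*(γ^3*(γ^6*x^10)) := by ring
  rw [hexp]
  linarith [f1, f2, f3, f4, f5]

/-- **First-moment estimate for the CUE kernel.**  With `K n` the CUE projection kernel
`K n x = (1/(2π)) Σ_{j<n} e^{ijx}` and
`Ω = {(u,t) : (u+t)/2 ∈ I, |u-t| < γ}` for an interval `I = [a, b) ⊆ [0, 2π)`,
the quantity `E = (1/2) ∫∫_Ω (K n 0 · K n 0 - K n (u-t) · K n (t-u)) du dt` satisfies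
`|E - |I| γ³ n⁴ / (144π²)| ≤ C |I| γ³ n⁴ / (144π²) · (n⁻¹ + γ²n² + (γ²n²)³)`
for an absolute constant `C`. -/
theorem first_moment_CUE :
    ∃ C : ℝ, ∀ n : ℕ, 1 ≤ n → ∀ γ : ℝ, 0 < γ → ∀ a b : ℝ,
      0 ≤ a → a ≤ b → b ≤ 2 * π →
      ∀ K : ℝ → ℂ,
      (K = fun x : ℝ => (1 / (2 * (π : ℂ))) *
        ∑ j ∈ Finset.range n, Complex.exp ((j : ℂ) * (x : ℂ) * Complex.I)) →
      ∀ Ω : Set (ℝ × ℝ),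
      (Ω = {p : ℝ × ℝ | (p.1 + p.2) / 2 ∈ Set.Ico a b ∧ |p.1 - p.2| < γ}) →
      ∀ E : ℂ,
      (E = (1 / 2) * ∫ p in Ω, (K 0 * K 0 - K (p.1 - p.2) * K (p.2 - p.1))) →
      ‖E - ((b - a) * γ ^ 3 * (n : ℝ) ^ 4 / (144 * π ^ 2) : ℝ)‖ ≤
        C * ((b - a) * γ ^ 3 * (n : ℝ) ^ 4 / (144 * π ^ 2)) *
          ((n : ℝ)⁻¹ + γ ^ 2 * (n : ℝ) ^ 2 + (γ ^ 2 * (n : ℝ) ^ 2) ^ 3) := by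
  refine ⟨200, ?_⟩
  intro n hn γ hγ a b ha hab hb K hK Ω hΩ E hE
  have hπ : 0 < π := Real.pi_pos
  have hπ0 : (π:ℝ) ≠ 0 := hπ.ne'
  have hn1 : (1:ℝ) ≤ (n:ℝ) := by exact_mod_cast hn
  have hn0 : (n:ℝ) ≠ 0 := by positivity
  -- notation
  set c : ℂ := (1 / (2 * (π : ℂ))) with hc
  set T : ℕ → ℕ → ℝ := fun j k =>
    if ((j:ℝ)-(k:ℝ)) = 0 then 0
    else 2*γ - 2*Real.sin (((j:ℝ)-(k:ℝ))*γ)/((j:ℝ)-(k:ℝ)) with hT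
  set S : ℝ := ∑ j ∈ Finset.range n, ∑ k ∈ Finset.range n, T j k with hS
  set G : ℝ → ℂ := fun v => c^2 *
    ∑ j ∈ Finset.range n, ∑ k ∈ Finset.range n,
      ((1:ℂ) - Complex.exp (((((j:ℝ)-(k:ℝ)):ℝ):ℂ) * (v:ℂ) * Complex.I)) with hG
  -- Step 1: integrand equals G (p.1 - p.2)
  have hFeq : ∀ p : ℝ × ℝ,
      K 0 * K 0 - K (p.1 - p.2) * K (p.2 - p.1) = G (p.1 - p.2) := by
    intro p
    set v : ℝ := p.1 - p.2 with hv
    have h21 : p.2 - p.1 = -v := by rw [hv]; ring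
    have hK0 : K 0 = c * n := by
      rw [hK]; simp
    have hKprod : K v * K (-v) = c^2 *
        ∑ j ∈ Finset.range n, ∑ k ∈ Finset.range n,
          Complex.exp (((((j:ℝ)-(k:ℝ)):ℝ):ℂ) * (v:ℂ) * Complex.I) := by
      rw [hK]
      simp only []
      rw [mul_mul_mul_comm, ← pow_two, Finset.sum_mul_sum]
      congr 1
      apply Finset.sum_congr rfl; intro j _
      apply Finset.sum_congr rfl; intro k _
      rw [← Complex.exp_add]
      congr 1
      push_cast
      ring
    rw [h21, hK0, hKprod, hG]
    simp only [Finset.sum_sub_distrib, mul_sub]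
    congr 1
    simp only [Finset.sum_const, Finset.card_range, nsmul_eq_mul, mul_one]
    push_cast
    ring
  -- Step 2: compute the integral
  have hGcont : Continuous G := by
    apply Continuous.mul continuous_const
    apply continuous_finset_sum; intro j _
    apply continuous_finset_sum; intro k _
    fun_prop
  have hIntOn : ∀ f : ℝ → ℂ, Continuous f → IntegrableOn f (Set.Ioo (-γ) γ) := by
    intro f hf
    exact (hf.integrableOn_Icc).mono_set Set.Ioo_subset_Icc_self
  have hGint : ∫ v in Set.Ioo (-γ) γ, G v = ((S / (4 * π^2) : ℝ) : ℂ) := by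
    rw [hG]
    simp only []
    rw [MeasureTheory.integral_const_mul]
    have hsum : ∫ v in Set.Ioo (-γ) γ,
        (∑ j ∈ Finset.range n, ∑ k ∈ Finset.range n,
          ((1:ℂ) - Complex.exp (((((j:ℝ)-(k:ℝ)):ℝ):ℂ) * (v:ℂ) * Complex.I)))
        = ∑ j ∈ Finset.range n, ∑ k ∈ Finset.range n, ((T j k : ℝ) : ℂ) := by
      rw [integral_finset_sum]
      · apply Finset.sum_congr rfl; intro j _
        rw [integral_finset_sum]
        · apply Finset.sum_congr rfl; intro k _
          exact term_integral γ hγ _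
        · intro k _
          apply hIntOn; fun_prop
      · intro j _
        apply hIntOn
        apply continuous_finset_sum; intro k _; fun_prop
    rw [hsum]
    have hcsq : c^2 = (((1 / (4 * π^2)) : ℝ) : ℂ) := by
      rw [hc]; push_cast; ring
    rw [hcsq, hS]
    push_cast
    ring
  -- Step 3: evaluate E
  have hEval : E = (((b - a) * S / (8 * π^2) : ℝ) : ℂ) := by
    rw [hE, hΩ]
    simp only [hFeq]
    rw [omega_integral a b γ G hGcont, hGint, Real.volume_Ico,
      ENNReal.toReal_ofReal (by linarith : (0:ℝ) ≤ b - a), Complex.real_smul]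
    push_cast
    ring
  rw [hEval, ← Complex.ofReal_sub, Complex.norm_real, Real.norm_eq_abs]
  -- Step 4: real estimates
  have est1 : ∀ j k : ℕ, |T j k - ((j:ℝ)-(k:ℝ))^2*γ^3/3| ≤ ((j:ℝ)-(k:ℝ))^4*γ^5/60 := by
    intro j k
    by_cases hm : ((j:ℝ)-(k:ℝ)) = 0
    · simp [hT, hm]
    · set m := ((j:ℝ)-(k:ℝ)) with hmdef
      have h5 := sin_taylor5 (m*γ)
      have hTval : T j k = 2*γ - 2*Real.sin (m*γ)/m := by
        rw [hT]; simp only [← hmdef, if_neg hm]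
      have key : T j k - m^2*γ^3/3 = (-2/m) * (Real.sin (m*γ) - (m*γ - (m*γ)^3/6)) := by
        rw [hTval]; field_simp; ring
      rw [key, abs_mul]
      have habs2 : |(-2 : ℝ)/m| = 2/|m| := by rw [abs_div]; norm_num
      rw [habs2]
      have hmabs : 0 < |m| := abs_pos.mpr hm
      have hm4 : |m|^4 = m^4 := by
        rw [← abs_pow]; exact abs_of_nonneg (by positivity)
      calc 2/|m| * |Real.sin (m*γ) - (m*γ - (m*γ)^3/6)|
          ≤ 2/|m| * (1/120 * |m*γ|^5) := by
            apply mul_le_mul_of_nonneg_left h5 (by positivity)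
        _ = m^4*γ^5/60 := by
            rw [abs_mul, abs_of_pos hγ, mul_pow]
            rw [show |m|^5 = m^4 * |m| from by rw [pow_succ, hm4]]
            field_simp
            ring
  have hA : ∑ j ∈ Finset.range n, ∑ k ∈ Finset.range n, ((j:ℝ)-(k:ℝ))^2*γ^3/3
      = γ^3*((n:ℝ)^2*((n:ℝ)^2-1))/18 := by
    have hinner : ∀ j ∈ Finset.range n,
        ∑ k ∈ Finset.range n, ((j:ℝ)-(k:ℝ))^2*γ^3/3
          = (∑ k ∈ Finset.range n, ((j:ℝ)-(k:ℝ))^2)*(γ^3/3) := by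
      intro j _
      rw [Finset.sum_mul]
      apply Finset.sum_congr rfl; intros; ring
    rw [Finset.sum_congr rfl hinner, ← Finset.sum_mul, sum_sq_diff]
    ring
  have hsub : S - γ^3*((n:ℝ)^2*((n:ℝ)^2-1))/18
      = ∑ j ∈ Finset.range n, ∑ k ∈ Finset.range n,
          (T j k - ((j:ℝ)-(k:ℝ))^2*γ^3/3) := by
    simp only [Finset.sum_sub_distrib]
    rw [← hA, hS]
  have est2 : |S - γ^3*((n:ℝ)^2*((n:ℝ)^2-1))/18| ≤ (n:ℝ)^6*γ^5/60 := by
    rw [hsub]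
    calc |∑ j ∈ Finset.range n, ∑ k ∈ Finset.range n,
            (T j k - ((j:ℝ)-(k:ℝ))^2*γ^3/3)|
        ≤ ∑ j ∈ Finset.range n, ∑ k ∈ Finset.range n,
            |T j k - ((j:ℝ)-(k:ℝ))^2*γ^3/3| := by
          refine (Finset.abs_sum_le_sum_abs _ _).trans ?_
          apply Finset.sum_le_sum; intro j _
          exact Finset.abs_sum_le_sum_abs _ _
      _ ≤ ∑ j ∈ Finset.range n, ∑ k ∈ Finset.range n, ((n:ℝ)^4*γ^5/60) := by
          apply Finset.sum_le_sum; intro j hj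
          apply Finset.sum_le_sum; intro k hk
          refine (est1 j k).trans ?_
          have hj' : (j:ℝ) < n := by exact_mod_cast Finset.mem_range.mp hj
          have hk' : (k:ℝ) < n := by exact_mod_cast Finset.mem_range.mp hk
          have hj0 : (0:ℝ) ≤ (j:ℝ) := Nat.cast_nonneg j
          have hk0 : (0:ℝ) ≤ (k:ℝ) := Nat.cast_nonneg k
          have habs : |(j:ℝ)-(k:ℝ)| ≤ (n:ℝ) := abs_le.mpr ⟨by linarith, by linarith⟩
          have hp : ((j:ℝ)-(k:ℝ))^4 ≤ (n:ℝ)^4 := by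
            calc ((j:ℝ)-(k:ℝ))^4 = |(j:ℝ)-(k:ℝ)|^4 := by
                  rw [← abs_pow]; exact (abs_of_nonneg (by positivity)).symm
              _ ≤ (n:ℝ)^4 := by
                  exact pow_le_pow_left₀ (abs_nonneg _) habs 4
          have : (0:ℝ) ≤ γ^5/60 := div_nonneg (pow_pos hγ 5).le (by norm_num)
          calc ((j:ℝ)-(k:ℝ))^4*γ^5/60 = ((j:ℝ)-(k:ℝ))^4*(γ^5/60) := by ring
            _ ≤ (n:ℝ)^4*(γ^5/60) := mul_le_mul_of_nonneg_right hp this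
            _ = (n:ℝ)^4*γ^5/60 := by ring
      _ = (n:ℝ)^6*γ^5/60 := by
          simp [Finset.sum_const, Finset.card_range]
          ring
  have htri : |S - γ^3*(n:ℝ)^4/18| ≤ (n:ℝ)^6*γ^5/60 + γ^3*(n:ℝ)^2/18 := by
    have hdec : S - γ^3*(n:ℝ)^4/18
        = (S - γ^3*((n:ℝ)^2*((n:ℝ)^2-1))/18) + (-(γ^3*(n:ℝ)^2/18)) := by ring
    rw [hdec]
    refine (abs_add_le _ _).trans ?_
    have hnn : (0:ℝ) ≤ γ^3*(n:ℝ)^2/18 :=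
      div_nonneg (mul_nonneg (pow_pos hγ 3).le (by positivity)) (by norm_num)
    rw [abs_neg, abs_of_nonneg hnn]
    linarith [est2]
  -- Step 5: conclusion
  have hba : (0:ℝ) ≤ b - a := by linarith
  have hmain : |(b-a)*S/(8*π^2) - (b-a)*γ^3*(n:ℝ)^4/(144*π^2)|
      = (b-a)/(8*π^2) * |S - γ^3*(n:ℝ)^4/18| := by
    rw [show (b-a)*S/(8*π^2) - (b-a)*γ^3*(n:ℝ)^4/(144*π^2)
        = ((b-a)/(8*π^2)) * (S - γ^3*(n:ℝ)^4/18) from by field_simp; ring,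
      abs_mul, abs_of_nonneg (div_nonneg hba (by positivity))]
  rw [hmain]
  have hR : 200 * ((b-a)*γ^3*(n:ℝ)^4/(144*π^2)) * ((n:ℝ)⁻¹ + γ^2*(n:ℝ)^2 + (γ^2*(n:ℝ)^2)^3)
      = (b-a)/(8*π^2) * ((200/18)*γ^3*((n:ℝ)^3 + γ^2*(n:ℝ)^6 + γ^6*(n:ℝ)^10)) := by
    field_simp
    ring
  rw [hR]
  have core := core_ineq hγ hn1
  calc (b-a)/(8*π^2) * |S - γ^3*(n:ℝ)^4/18|
      ≤ (b-a)/(8*π^2) * ((n:ℝ)^6*γ^5/60 + γ^3*(n:ℝ)^2/18) :=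
        mul_le_mul_of_nonneg_left htri (div_nonneg hba (by positivity))
    _ ≤ (b-a)/(8*π^2) * ((200/18)*γ^3*((n:ℝ)^3 + γ^2*(n:ℝ)^6 + γ^6*(n:ℝ)^10)) :=
        mul_le_mul_of_nonneg_left core (div_nonneg hba (by positivity))
end

section
/- Let n ≥ 1 and let η₀, …, η_{n−1} : ℝ → ℝ be measurable functions orthonormal in L²(ℝ): ∫_ℝ ηᵢ(x)·ηⱼ(x) dx = δ_{ij}. Define K(x,y) = Σ_{j=0}^{n−1} ηⱼ(x)·ηⱼ(y). Then for every 1 ≤ l ≤ n and all fixed real numbers t₁, …, t_{l−1}: ∫_ℝ det[ (K(tᵢ,tⱼ))_{1≤i,j≤l} ] dt_l = (n − l + 1) · det[ (K(tᵢ,tⱼ))_{1≤i,j≤l−1} ] (where for l = 1 the empty determinant on the right is 1). -/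
open MeasureTheory Real

/-! ### Auxiliary matrix constructions for Gaudin's lemma -/

/-- The `(m+1) × (m+1)` matrix whose top-left `m × m` block is `C`, whose last column
(above the corner) is `v`, and whose last row is `u`. -/
private def gaudinP {m : ℕ} (C : Matrix (Fin m) (Fin m) ℝ) (v : Fin m → ℝ)
    (u : Fin (m + 1) → ℝ) : Matrix (Fin (m + 1)) (Fin (m + 1)) ℝ :=
  Matrix.of (Fin.snoc (fun i => Fin.snoc (C i) (v i)) u)

private lemma gaudinP_cc {m : ℕ} (C : Matrix (Fin m) (Fin m) ℝ) (v : Fin m → ℝ)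
    (u : Fin (m + 1) → ℝ) (i q : Fin m) :
    gaudinP C v u i.castSucc q.castSucc = C i q := by
  simp [gaudinP, Fin.snoc_castSucc]

private lemma gaudinP_cl {m : ℕ} (C : Matrix (Fin m) (Fin m) ℝ) (v : Fin m → ℝ)
    (u : Fin (m + 1) → ℝ) (i : Fin m) :
    gaudinP C v u i.castSucc (Fin.last m) = v i := by
  simp [gaudinP, Fin.snoc_castSucc, Fin.snoc_last]

private lemma gaudinP_l {m : ℕ} (C : Matrix (Fin m) (Fin m) ℝ) (v : Fin m → ℝ)
    (u : Fin (m + 1) → ℝ) (q : Fin (m + 1)) :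
    gaudinP C v u (Fin.last m) q = u q := by
  simp [gaudinP, Fin.snoc_last]

/-- Updating the last row of a `gaudinP` matrix. -/
private lemma gaudinP_updateRow {m : ℕ} (C : Matrix (Fin m) (Fin m) ℝ) (v : Fin m → ℝ)
    (u u' : Fin (m + 1) → ℝ) :
    (gaudinP C v u').updateRow (Fin.last m) u = gaudinP C v u := by
  ext i q
  refine Fin.lastCases ?_ (fun i0 => ?_) i
  · simp [Matrix.updateRow_self, gaudinP_l]
  · rw [Matrix.updateRow_ne (Fin.castSucc_lt_last i0).ne]
    refine Fin.lastCases ?_ (fun q0 => ?_) q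
    · rw [gaudinP_cl, gaudinP_cl]
    · rw [gaudinP_cc, gaudinP_cc]

/-- Updating the last column of a `gaudinP` matrix whose last row is a `snoc`. -/
private lemma gaudinP_updateCol {m : ℕ} (C : Matrix (Fin m) (Fin m) ℝ)
    (v v' w : Fin m → ℝ) (b a : ℝ) :
    (gaudinP C v' (Fin.snoc w b)).updateCol (Fin.last m) (Fin.snoc v a)
      = gaudinP C v (Fin.snoc w a) := by
  ext i q
  refine Fin.lastCases ?_ (fun q0 => ?_) q
  · rw [Matrix.updateCol_self]
    refine Fin.lastCases ?_ (fun i0 => ?_) i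
    · rw [gaudinP_l, Fin.snoc_last, Fin.snoc_last]
    · rw [gaudinP_cl, Fin.snoc_castSucc]
  · rw [Matrix.updateCol_ne (Fin.castSucc_lt_last q0).ne]
    refine Fin.lastCases ?_ (fun i0 => ?_) i
    · rw [gaudinP_l, gaudinP_l, Fin.snoc_castSucc, Fin.snoc_castSucc]
    · rw [gaudinP_cc, gaudinP_cc]

/-- Bordered determinant: if the last row is the last standard basis vector,
the determinant is the one of the top-left block. -/
private lemma gaudinP_det_single {m : ℕ} (C : Matrix (Fin m) (Fin m) ℝ) (v : Fin m → ℝ) :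
    (gaudinP C v (Pi.single (Fin.last m) 1)).det = C.det := by
  rw [Matrix.det_succ_row (gaudinP C v (Pi.single (Fin.last m) 1)) (Fin.last m),
    Fin.sum_univ_castSucc]
  have hz : ∀ q : Fin m,
      (-1 : ℝ) ^ ((Fin.last m : ℕ) + ((q.castSucc : Fin (m + 1)) : ℕ))
        * gaudinP C v (Pi.single (Fin.last m) 1) (Fin.last m) q.castSucc
        * ((gaudinP C v (Pi.single (Fin.last m) 1)).submatrix
            (Fin.last m).succAbove q.castSucc.succAbove).det = 0 := by
    intro q
    rw [gaudinP_l, Pi.single_eq_of_ne (Fin.castSucc_lt_last q).ne]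
    ring
  rw [Finset.sum_eq_zero fun q _ => hz q, zero_add, gaudinP_l, Pi.single_eq_same]
  have hsign : (-1 : ℝ) ^ ((Fin.last m : ℕ) + ((Fin.last m : Fin (m + 1)) : ℕ)) = 1 := by
    rw [Fin.val_last]
    exact Even.neg_one_pow ⟨m, rfl⟩
  rw [hsign, one_mul, one_mul]
  congr 1
  ext i q
  rw [Matrix.submatrix_apply, Fin.succAbove_last]
  exact gaudinP_cc _ _ _ i q

/-- Rank-one row-expansion of the determinant:
`det (B + c ⊗ r) = det B + Σ_i c i * det (B with row i replaced by r)`. -/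
private lemma det_add_smul_rows {μ : ℕ} (B : Matrix (Fin (μ + 1)) (Fin (μ + 1)) ℝ)
    (c r : Fin (μ + 1) → ℝ) :
    Matrix.det (Matrix.of fun i => B i + c i • r)
      = B.det + ∑ i, c i * (B.updateRow i r).det := by
  let f : (Fin (μ + 1) → ℝ) [⋀^Fin (μ + 1)]→ₗ[ℝ] ℝ := Matrix.detRowAlternating
  let C : Fin (μ + 1) → Fin (μ + 1) → ℝ := fun i => c i • r
  have hadd : Matrix.det (Matrix.of fun i => B i + c i • r) = f (C + fun i => B i) := by
    show f _ = f _
    congr 1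
    funext i
    exact add_comm _ _
  have hsum := f.toMultilinearMap.map_add_univ C fun i => B i
  rw [AlternatingMap.coe_multilinearMap] at hsum
  rw [hadd, hsum]
  have hzero : ∀ s : Finset (Fin (μ + 1)), ¬ s.card ≤ 1 → f (s.piecewise C fun i => B i) = 0 := by
    intro s hs
    push_neg at hs
    obtain ⟨i, hi, i', hi', hne⟩ := Finset.one_lt_card.mp hs
    set v : Fin (μ + 1) → Fin (μ + 1) → ℝ := s.piecewise C fun i => B i with hv
    have hvi : v i = c i • r := Finset.piecewise_eq_of_mem _ _ _ hi
    have hvi' : v i' = c i' • r := Finset.piecewise_eq_of_mem _ _ _ hi'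
    have h1 : f v = c i • f (Function.update v i r) := by
      conv_lhs => rw [← Function.update_eq_self i v, hvi]
      exact f.map_update_smul v i (c i) r
    have h2 : Function.update v i r i' = c i' • r := by
      rw [Function.update_of_ne hne.symm, hvi']
    have h3 : f (Function.update v i r)
        = c i' • f (Function.update (Function.update v i r) i' r) := by
      conv_lhs => rw [← Function.update_eq_self i' (Function.update v i r), h2]
      exact f.map_update_smul _ i' (c i') r
    have h4 : f (Function.update (Function.update v i r) i' r) = 0 := by
      refine f.map_eq_zero_of_eq _ (?_ : _ = _) hne
      rw [Function.update_of_ne hne, Function.update_self, Function.update_self]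
    rw [h1, h3, h4]
    simp
  rw [← Finset.sum_filter_of_ne (p := fun s => s.card ≤ 1) (fun s _ h => by by_contra hc; exact h (hzero s hc))]
  have hset : Finset.univ.filter (fun s : Finset (Fin (μ + 1)) => s.card ≤ 1)
      = insert (∅ : Finset (Fin (μ + 1))) (Finset.univ.image fun i => {i}) := by
    ext s
    simp only [Finset.mem_filter, Finset.mem_univ, true_and, Finset.mem_insert, Finset.mem_image]
    rw [Finset.card_le_one_iff_subset_singleton]
    constructor
    · rintro ⟨x, hx⟩
      rcases Finset.subset_singleton_iff.mp hx with h | h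
      · exact Or.inl h
      · exact Or.inr ⟨x, h.symm⟩
    · rintro (h | ⟨x, hx⟩)
      · exact ⟨0, by simp [h]⟩
      · exact ⟨x, by rw [← hx]⟩
  rw [hset, Finset.sum_insert (by simp), Finset.sum_image
    (fun a _ b _ h => Finset.singleton_injective h)]
  have hone : ∀ i : Fin (μ + 1), f ((({i} : Finset (Fin (μ + 1)))).piecewise C fun i => B i)
      = c i * (B.updateRow i r).det := by
    intro i
    rw [Finset.piecewise_singleton]
    have h5 : f (Function.update (fun i => B i) i (C i))
        = c i • f (Function.update (fun i => B i) i r) := f.map_update_smul _ i (c i) r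
    rw [h5]
    rfl
  rw [Finset.sum_congr rfl fun i _ => hone i]
  congr 1

/-- **Gaudin's integrating-out lemma.**  Let `η 0, …, η (n-1)` be measurable functions
orthonormal in `L²(ℝ)` and `K x y = Σ_j η j x * η j y` the associated projection kernel.
Then for `1 ≤ l ≤ n` (written `l = m + 1`) and fixed `t₁, …, t_m`, integrating the
`l × l` determinant `det [K tᵢ tⱼ]` over the last variable gives
`(n - l + 1)` times the `(l-1) × (l-1)` determinant. -/
theorem gaudin_integrate_out
    (n : ℕ) (hn : 1 ≤ n) (η : Fin n → ℝ → ℝ)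
    (hmeas : ∀ i, Measurable (η i))
    (hL2 : ∀ i, MemLp (η i) 2 (volume : Measure ℝ))
    (horth : ∀ i j, (∫ x : ℝ, η i x * η j x) = if i = j then 1 else 0)
    (K : ℝ → ℝ → ℝ) (hK : ∀ x y, K x y = ∑ j, η j x * η j y)
    (m : ℕ) (hm : m + 1 ≤ n) (t : Fin m → ℝ) :
    (∫ s : ℝ, Matrix.det (Matrix.of fun i j : Fin (m + 1) =>
        K ((Fin.snoc t s : Fin (m + 1) → ℝ) i) ((Fin.snoc t s : Fin (m + 1) → ℝ) j))) =
      ((n : ℝ) - m) * Matrix.det (Matrix.of fun i j : Fin m => K (t i) (t j)) := by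
  -- notation
  set B : Matrix (Fin m) (Fin m) ℝ := Matrix.of fun i j : Fin m => K (t i) (t j) with hB
  obtain ⟨γ, hγ⟩ : ∃ γ : Fin n → Fin m → ℝ, γ = fun j i => η j (t i) := ⟨_, rfl⟩
  obtain ⟨Q, hQ⟩ : ∃ Q : Fin n → Fin n → Matrix (Fin (m + 1)) (Fin (m + 1)) ℝ,
      Q = fun j k => gaudinP B (γ k) (Fin.snoc (γ j) (if j = k then 1 else 0)) := ⟨_, rfl⟩
  -- multilinearity helpers
  have det_row_sum : ∀ (M : Matrix (Fin (m + 1)) (Fin (m + 1)) ℝ) (r : Fin (m + 1))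
      (g : Fin n → Fin (m + 1) → ℝ),
      (M.updateRow r (∑ j, g j)).det = ∑ j, (M.updateRow r (g j)).det := by
    intro M r g
    exact (Matrix.detRowAlternating :
      (Fin (m + 1) → ℝ) [⋀^Fin (m + 1)]→ₗ[ℝ] ℝ).toMultilinearMap.map_update_sum Finset.univ r g M
  have det_col_sum : ∀ (M : Matrix (Fin (m + 1)) (Fin (m + 1)) ℝ) (r : Fin (m + 1))
      (g : Fin n → Fin (m + 1) → ℝ),
      (M.updateCol r (∑ j, g j)).det = ∑ j, (M.updateCol r (g j)).det := by
    intro M r g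
    rw [← Matrix.det_transpose, ← Matrix.updateRow_transpose, det_row_sum]
    exact Finset.sum_congr rfl fun j _ => by
      rw [Matrix.updateRow_transpose, Matrix.det_transpose]
  -- pointwise expansion of the integrand
  have key : ∀ s : ℝ,
      Matrix.det (Matrix.of fun i j : Fin (m + 1) =>
        K ((Fin.snoc t s : Fin (m + 1) → ℝ) i) ((Fin.snoc t s : Fin (m + 1) → ℝ) j))
      = ∑ j : Fin n, ∑ k : Fin n, (η j s * η k s) * (Q j k).det := by
    intro s
    have hAs : (Matrix.of fun i j : Fin (m + 1) =>
        K ((Fin.snoc t s : Fin (m + 1) → ℝ) i) ((Fin.snoc t s : Fin (m + 1) → ℝ) j))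
        = gaudinP B (fun i => K (t i) s) (Fin.snoc (fun q => K s (t q)) (K s s)) := by
      ext i q
      refine Fin.lastCases ?_ (fun i0 => ?_) i <;> refine Fin.lastCases ?_ (fun q0 => ?_) q
      · rw [gaudinP_l, Fin.snoc_last]
        simp [Fin.snoc_last]
      · rw [gaudinP_l, Fin.snoc_castSucc]
        simp [Fin.snoc_last, Fin.snoc_castSucc]
      · rw [gaudinP_cl]
        simp [Fin.snoc_last, Fin.snoc_castSucc]
      · rw [gaudinP_cc]
        simp [Fin.snoc_castSucc, hB]
    rw [hAs]
    have hu : (Fin.snoc (fun q => K s (t q)) (K s s) : Fin (m + 1) → ℝ)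
        = ∑ j : Fin n, η j s • (Fin.snoc (γ j) (η j s) : Fin (m + 1) → ℝ) := by
      funext q
      refine Fin.lastCases ?_ (fun q0 => ?_) q
      · simp only [Fin.snoc_last, Finset.sum_apply, Pi.smul_apply, smul_eq_mul, hK]
      · simp only [Fin.snoc_castSucc, Finset.sum_apply, Pi.smul_apply, smul_eq_mul, hK, hγ]
    rw [← gaudinP_updateRow B (fun i => K (t i) s) _ 0, hu, det_row_sum]
    refine Finset.sum_congr rfl fun j _ => ?_
    rw [Matrix.det_updateRow_smul, gaudinP_updateRow]
    have hcol : gaudinP B (fun i => K (t i) s) (Fin.snoc (γ j) (η j s))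
        = (gaudinP B 0 (Fin.snoc (γ j) 0)).updateCol (Fin.last m)
            (Fin.snoc (fun i => K (t i) s) (η j s)) := by
      rw [gaudinP_updateCol]
    have hv : (Fin.snoc (fun i => K (t i) s) (η j s) : Fin (m + 1) → ℝ)
        = ∑ k : Fin n, η k s • (Fin.snoc (γ k) (if j = k then 1 else 0) : Fin (m + 1) → ℝ) := by
      funext q
      refine Fin.lastCases ?_ (fun q0 => ?_) q
      · simp [Fin.snoc_last, mul_ite, Finset.sum_ite_eq]
      · simp only [Fin.snoc_castSucc, Finset.sum_apply, Pi.smul_apply, smul_eq_mul, hK, hγ]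
        exact Finset.sum_congr rfl fun k _ => mul_comm _ _
    rw [hcol, hv, det_col_sum, Finset.mul_sum]
    refine Finset.sum_congr rfl fun k _ => ?_
    rw [Matrix.det_updateCol_smul, gaudinP_updateCol, hQ]
    ring
  -- integrability
  have hmul : ∀ j k : Fin n, Integrable (fun s : ℝ => η j s * η k s) volume := by
    intro j k
    have h2 : (1 : ENNReal) / 1 = 1 / 2 + 1 / 2 := by
      rw [ENNReal.div_add_div_same, one_add_one_eq_two,
        ENNReal.div_self (by norm_num) (by norm_num),
        ENNReal.div_self (by norm_num) (by norm_num)]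
    have h := (hL2 k).smul (hL2 j) (r := 1)
    exact memLp_one_iff_integrable.mp h
  -- integrate term by term
  have h0 : (∫ s : ℝ, Matrix.det (Matrix.of fun i j : Fin (m + 1) =>
        K ((Fin.snoc t s : Fin (m + 1) → ℝ) i) ((Fin.snoc t s : Fin (m + 1) → ℝ) j)))
      = ∑ j : Fin n, ∑ k : Fin n, (∫ s : ℝ, η j s * η k s) * (Q j k).det := by
    rw [integral_congr_ae (Filter.Eventually.of_forall key)]
    rw [integral_finset_sum _ fun j _ => integrable_finset_sum _
      fun k _ => ((hmul j k).mul_const _)]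
    refine Finset.sum_congr rfl fun j _ => ?_
    rw [integral_finset_sum _ fun k _ => ((hmul j k).mul_const _)]
    exact Finset.sum_congr rfl fun k _ => integral_mul_const _ _
  rw [h0]
  have h1 : ∀ j : Fin n, (∑ k : Fin n, (∫ s : ℝ, η j s * η k s) * (Q j k).det)
      = (Q j j).det := by
    intro j
    rw [Finset.sum_congr rfl fun k _ => by rw [horth j k]]
    simp [ite_mul, Finset.sum_ite_eq]
  rw [Finset.sum_congr rfl fun j _ => h1 j]
  -- now compute ∑ j, det (Q j j)
  have hQjj : ∀ j : Fin n, (Q j j).det = (gaudinP B (γ j) (Fin.snoc (γ j) 0)).det + B.det := by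
    intro j
    have hsingle : (Fin.snoc (γ j) 1 : Fin (m + 1) → ℝ)
        = Fin.snoc (γ j) 0 + Pi.single (Fin.last m) 1 := by
      funext q
      refine Fin.lastCases ?_ (fun q0 => ?_) q
      · simp [Fin.snoc_last]
      · simp [Fin.snoc_castSucc, Pi.single_eq_of_ne (Fin.castSucc_lt_last q0).ne]
    have hQd : Q j j = gaudinP B (γ j) (Fin.snoc (γ j) 1) := by
      rw [hQ]
      simp
    rw [hQd, ← gaudinP_updateRow B (γ j) _ 0, hsingle, Matrix.det_updateRow_add,
      gaudinP_updateRow, gaudinP_updateRow, gaudinP_det_single]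
  rw [Finset.sum_congr rfl fun j _ => hQjj j, Finset.sum_add_distrib]
  -- ∑ j det (N j) = -m * det B
  have hNj : ∀ j : Fin n, gaudinP B (γ j) (Fin.snoc (γ j) 0)
      = Matrix.of (fun i => (gaudinP B 0 (Fin.snoc (γ j) 0)) i
          + (Fin.snoc (γ j) 0 : Fin (m + 1) → ℝ) i • (Pi.single (Fin.last m) 1 : Fin (m + 1) → ℝ)) := by
    intro j
    ext i q
    show gaudinP B (γ j) (Fin.snoc (γ j) 0) i q
      = gaudinP B 0 (Fin.snoc (γ j) 0) i q
        + (Fin.snoc (γ j) 0 : Fin (m + 1) → ℝ) i * (Pi.single (Fin.last m) 1 : Fin (m + 1) → ℝ) q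
    refine Fin.lastCases ?_ (fun i0 => ?_) i <;> refine Fin.lastCases ?_ (fun q0 => ?_) q
    · rw [gaudinP_l, gaudinP_l, Fin.snoc_last, Pi.single_eq_same]
      ring
    · rw [gaudinP_l, gaudinP_l, Pi.single_eq_of_ne (Fin.castSucc_lt_last q0).ne]
      ring
    · rw [gaudinP_cl, gaudinP_cl, Fin.snoc_castSucc, Pi.single_eq_same]
      simp
    · rw [gaudinP_cc, gaudinP_cc, Pi.single_eq_of_ne (Fin.castSucc_lt_last q0).ne]
      ring
  have hdet0 : ∀ j : Fin n, (gaudinP B 0 (Fin.snoc (γ j) 0)).det = 0 := by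
    intro j
    refine Matrix.det_eq_zero_of_column_eq_zero (Fin.last m) fun i => ?_
    refine Fin.lastCases ?_ (fun i0 => ?_) i
    · rw [gaudinP_l, Fin.snoc_last]
    · rw [gaudinP_cl]
      rfl
  have hexp : ∀ j : Fin n, (gaudinP B (γ j) (Fin.snoc (γ j) 0)).det
      = ∑ i0 : Fin m, γ j i0 * ((gaudinP B 0 (Fin.snoc (γ j) 0)).updateRow i0.castSucc
          (Pi.single (Fin.last m) 1)).det := by
    intro j
    rw [hNj j, det_add_smul_rows, hdet0, zero_add, Fin.sum_univ_castSucc]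
    simp [Fin.snoc_last, Fin.snoc_castSucc]
  have hswapsum : (∑ j : Fin n, (gaudinP B (γ j) (Fin.snoc (γ j) 0)).det)
      = - (m : ℝ) * B.det := by
    rw [Finset.sum_congr rfl fun j _ => hexp j, Finset.sum_comm]
    have hinner : ∀ i0 : Fin m,
        (∑ j : Fin n, γ j i0 * ((gaudinP B 0 (Fin.snoc (γ j) 0)).updateRow i0.castSucc
          (Pi.single (Fin.last m) 1)).det) = - B.det := by
      intro i0
      -- rewrite each matrix as an update of a fixed matrix
      have hRZ : ∀ j : Fin n, (gaudinP B 0 (Fin.snoc (γ j) 0)).updateRow i0.castSucc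
            (Pi.single (Fin.last m) 1)
          = ((gaudinP B 0 0).updateRow i0.castSucc (Pi.single (Fin.last m) 1)).updateRow
              (Fin.last m) (Fin.snoc (γ j) 0) := by
        intro j
        ext i q
        rcases eq_or_ne i (Fin.last m) with hi | hi
        · subst hi
          rw [Matrix.updateRow_ne (Fin.castSucc_lt_last i0).ne',
            Matrix.updateRow_self, gaudinP_l]
        · rw [Matrix.updateRow_ne hi]
          rcases eq_or_ne i i0.castSucc with hii | hii
          · subst hii
            rw [Matrix.updateRow_self, Matrix.updateRow_self]
          · rw [Matrix.updateRow_ne hii, Matrix.updateRow_ne hii]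
            obtain ⟨i1, rfl⟩ := Fin.exists_castSucc_eq.mpr hi
            refine Fin.lastCases ?_ (fun q0 => ?_) q
            · rw [gaudinP_cl, gaudinP_cl]
            · rw [gaudinP_cc, gaudinP_cc]
      calc (∑ j : Fin n, γ j i0 * ((gaudinP B 0 (Fin.snoc (γ j) 0)).updateRow i0.castSucc
              (Pi.single (Fin.last m) 1)).det)
          = ∑ j : Fin n, (((gaudinP B 0 0).updateRow i0.castSucc
              (Pi.single (Fin.last m) 1)).updateRow (Fin.last m)
                (γ j i0 • (Fin.snoc (γ j) 0 : Fin (m + 1) → ℝ))).det := by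
            refine Finset.sum_congr rfl fun j _ => ?_
            rw [Matrix.det_updateRow_smul, hRZ j]
        _ = (((gaudinP B 0 0).updateRow i0.castSucc (Pi.single (Fin.last m) 1)).updateRow
              (Fin.last m) (∑ j : Fin n, γ j i0 • (Fin.snoc (γ j) 0 : Fin (m + 1) → ℝ))).det := by
            rw [det_row_sum]
        _ = (((gaudinP B 0 0).updateRow i0.castSucc (Pi.single (Fin.last m) 1)).updateRow
              (Fin.last m) (Fin.snoc (B i0) 0)).det := by
            have hvec : (∑ j : Fin n, γ j i0 • (Fin.snoc (γ j) 0 : Fin (m + 1) → ℝ))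
                = Fin.snoc (B i0) 0 := by
              funext q
              refine Fin.lastCases ?_ (fun q0 => ?_) q
              · simp [Fin.snoc_last, Finset.sum_apply]
              · simp only [Fin.snoc_castSucc, Finset.sum_apply, Pi.smul_apply, smul_eq_mul,
                  hγ, hB, Matrix.of_apply, hK]
            rw [hvec]
        _ = - B.det := ?_
      -- identify with a row swap of the bordered matrix
      have hswap : ((gaudinP B 0 0).updateRow i0.castSucc (Pi.single (Fin.last m) 1)).updateRow
            (Fin.last m) (Fin.snoc (B i0) 0)
          = (gaudinP B 0 (Pi.single (Fin.last m) 1)).submatrix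
              (Equiv.swap i0.castSucc (Fin.last m)) id := by
        ext i q
        rw [Matrix.submatrix_apply, id_eq]
        rcases eq_or_ne i (Fin.last m) with hi | hi
        · subst hi
          rw [Matrix.updateRow_self, Equiv.swap_apply_right]
          refine Fin.lastCases ?_ (fun q0 => ?_) q
          · rw [Fin.snoc_last, gaudinP_cl]
            rfl
          · rw [Fin.snoc_castSucc, gaudinP_cc]
        · rw [Matrix.updateRow_ne hi]
          rcases eq_or_ne i i0.castSucc with hii | hii
          · subst hii
            rw [Matrix.updateRow_self, Equiv.swap_apply_left, gaudinP_l]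
          · rw [Matrix.updateRow_ne hii, Equiv.swap_apply_of_ne_of_ne hii hi]
            obtain ⟨i1, rfl⟩ := Fin.exists_castSucc_eq.mpr hi
            refine Fin.lastCases ?_ (fun q0 => ?_) q
            · rw [gaudinP_cl, gaudinP_cl]
            · rw [gaudinP_cc, gaudinP_cc]
      rw [hswap, Matrix.det_permute, Equiv.Perm.sign_swap (Fin.castSucc_lt_last i0).ne,
        gaudinP_det_single]
      simp
    rw [Finset.sum_congr rfl fun i0 _ => hinner i0, Finset.sum_const, Finset.card_univ,
      Fintype.card_fin, nsmul_eq_mul]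
    ring
  rw [hswapsum, Finset.sum_const, Finset.card_univ, Fintype.card_fin, nsmul_eq_mul]
  ring
end

section
/- For every ε > 0 there is a constant C (depending only on ε) such that for all integers n ≥ 1 and all real x with |x| ≤ (√2 − ε)·√n, | Φ(x, n+1)/Φ(x, n) − ( x + i·√(2n − x²) )/√(2n) | ≤ C/n. -/
open Real

set_option maxHeartbeats 1000000


lemma aux_exp_dist (a b : ℝ) :
    ‖Complex.exp (Complex.I * a) - Complex.exp (Complex.I * b)‖ ≤ 2 * |a - b| := by
  have h1 : Complex.exp (Complex.I * a) - Complex.exp (Complex.I * b)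
      = Complex.exp (Complex.I * b) * (Complex.exp (Complex.I * ((a - b : ℝ) : ℂ)) - 1) := by
    rw [mul_sub, ← Complex.exp_add, mul_one]
    push_cast
    ring_nf
  have hb : ‖Complex.exp (Complex.I * b)‖ = 1 := by
    rw [Complex.norm_exp]; simp
  have habs : ‖Complex.I * ((a - b : ℝ) : ℂ)‖ = |a - b| := by
    rw [norm_mul, Complex.norm_I, one_mul, Complex.norm_real, Real.norm_eq_abs]
  rw [h1, norm_mul, hb, one_mul]
  rcases le_or_gt (|a - b|) 1 with h | h
  · have := Complex.norm_exp_sub_one_le (x := Complex.I * ((a - b : ℝ) : ℂ)) (by rw [habs]; exact h)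
    rwa [habs] at this
  · have h2 : ‖Complex.exp (Complex.I * ((a - b : ℝ) : ℂ)) - 1‖
        ≤ ‖Complex.exp (Complex.I * ((a - b : ℝ) : ℂ))‖ + 1 := by
      simpa using norm_sub_le (Complex.exp (Complex.I * ((a - b : ℝ) : ℂ))) 1
    have h3 : ‖Complex.exp (Complex.I * ((a - b : ℝ) : ℂ))‖ = 1 := by
      rw [Complex.norm_exp]; simp
    nlinarith [h2, h3]

lemma aux_sub_sin (t : ℝ) : |t - Real.sin t| ≤ 2 * |t| ^ 3 := by
  have key : ∀ u : ℝ, 0 ≤ u → |u - Real.sin u| ≤ 2 * |u| ^ 3 := by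
    intro u hu
    rcases le_or_gt u 1 with h | h
    · rcases eq_or_lt_of_le hu with rfl | hu'
      · simp
      · have h1 := Real.sin_gt_sub_cube hu'
        have h2 := Real.sin_le hu
        rw [abs_of_nonneg hu, abs_of_nonneg (by linarith)]
        nlinarith
    · have h1 : Real.sin u ≤ 1 := Real.sin_le_one u
      have h2 : -1 ≤ Real.sin u := Real.neg_one_le_sin u
      have h3 : 0 ≤ u * (u - 1) * (u + 1) :=
        mul_nonneg (mul_nonneg hu (by linarith)) (by linarith)
      rw [abs_of_nonneg hu, abs_le]
      constructor <;> nlinarith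
  rcases le_or_gt 0 t with h | h
  · exact key t h
  · have h2 := key (-t) (by linarith)
    rw [Real.sin_neg, show -t - -Real.sin t = -(t - Real.sin t) by ring, abs_neg, abs_neg] at h2
    exact h2

lemma aux_arccos_lip {c a b : ℝ} (hc : c < 1) (ha : |a| ≤ c) (hb : |b| ≤ c) :
    |Real.arccos a - Real.arccos b| ≤ (1 / Real.sqrt (1 - c ^ 2)) * |a - b| := by
  have hc0 : 0 ≤ c := le_trans (abs_nonneg a) ha
  have hpos : 0 < 1 - c ^ 2 := by nlinarith
  have key := Convex.norm_image_sub_le_of_norm_hasDerivWithin_le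
    (f := Real.arccos) (f' := fun y => -(1 / Real.sqrt (1 - y ^ 2)))
    (s := Set.Icc (-c) c) (C := 1 / Real.sqrt (1 - c ^ 2))
    (fun y hy => by
      have hy1 : y ≠ -1 := by
        intro h; rw [h] at hy; simp [Set.mem_Icc] at hy; linarith [hy.1]
      have hy2 : y ≠ 1 := by
        intro h; rw [h] at hy; simp [Set.mem_Icc] at hy; linarith [hy.2]
      exact (Real.hasDerivAt_arccos hy1 hy2).hasDerivWithinAt)
    (fun y hy => by
      simp only [Set.mem_Icc] at hy
      have hy2 : y ^ 2 ≤ c ^ 2 := by nlinarith [hy.1, hy.2]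
      have hgt : 0 < Real.sqrt (1 - c ^ 2) := Real.sqrt_pos.2 hpos
      have hle : Real.sqrt (1 - c ^ 2) ≤ Real.sqrt (1 - y ^ 2) :=
        Real.sqrt_le_sqrt (by linarith)
      rw [norm_neg, norm_div, Real.norm_eq_abs, Real.norm_eq_abs, abs_one,
        abs_of_nonneg (Real.sqrt_nonneg _)]
      exact div_le_div_of_nonneg_left one_pos.le hgt hle |>.trans_eq rfl)
    (convex_Icc _ _)
    (abs_le.1 hb |> fun h => Set.mem_Icc.2 ⟨h.1, h.2⟩)
    (abs_le.1 ha |> fun h => Set.mem_Icc.2 ⟨h.1, h.2⟩)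
  simpa [Real.norm_eq_abs, abs_sub_comm] using key

lemma aux_phi_eq (x : ℝ) (m : ℕ) (hm : 1 ≤ m) (hx : x ^ 2 < 2 * m) :
    Complex.exp (Complex.I * (π : ℂ) / 4) *
      (((x / Real.sqrt (2 * m) : ℝ) : ℂ) +
          Complex.I * ((Real.sqrt (1 - x ^ 2 / (2 * m)) : ℝ) : ℂ)) ^ ((m : ℂ) - 1 / 2) *
      Complex.exp (-(Complex.I / 2) * (x : ℂ) * ((Real.sqrt (2 * m - x ^ 2) : ℝ) : ℂ))
    = Complex.exp (Complex.I * ((π / 4 + ((m : ℝ) - 1 / 2) * Real.arccos (x / Real.sqrt (2 * m))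
        - x * Real.sqrt (2 * m - x ^ 2) / 2 : ℝ) : ℂ)) := by
  have hm0 : (0 : ℝ) < 2 * m := by positivity
  have ha0 : (0 : ℝ) < Real.sqrt (2 * m) := Real.sqrt_pos.2 hm0
  set u : ℝ := x / Real.sqrt (2 * m) with hu_def
  have hu2 : u ^ 2 = x ^ 2 / (2 * m) := by
    rw [hu_def, div_pow, Real.sq_sqrt hm0.le]
  have hu2lt : u ^ 2 < 1 := by rw [hu2]; rw [div_lt_one hm0]; exact hx
  have hu1 : -1 ≤ u := by nlinarith
  have hu1' : u ≤ 1 := by nlinarith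
  set θ : ℝ := Real.arccos u with hθ_def
  have hcos : Real.cos θ = u := Real.cos_arccos hu1 hu1'
  have hsin : Real.sin θ = Real.sqrt (1 - x ^ 2 / (2 * m)) := by
    rw [hθ_def, Real.sin_arccos, hu2]
  have hbase : ((u : ℝ) : ℂ) + Complex.I * ((Real.sqrt (1 - x ^ 2 / (2 * m)) : ℝ) : ℂ)
      = Complex.exp ((θ : ℂ) * Complex.I) := by
    rw [Complex.exp_mul_I, ← Complex.ofReal_cos, ← Complex.ofReal_sin, hcos, hsin]
    ring
  have hθmem : -π < ((θ : ℂ) * Complex.I).im ∧ ((θ : ℂ) * Complex.I).im ≤ π := by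
    simp only [Complex.mul_I_im, Complex.ofReal_re]
    exact ⟨lt_of_lt_of_le (by linarith [Real.pi_pos]) (Real.arccos_nonneg u),
      Real.arccos_le_pi u⟩
  have hne : ((u : ℝ) : ℂ) + Complex.I * ((Real.sqrt (1 - x ^ 2 / (2 * m)) : ℝ) : ℂ) ≠ 0 := by
    rw [hbase]; exact Complex.exp_ne_zero _
  have hpow : (((u : ℝ) : ℂ) + Complex.I * ((Real.sqrt (1 - x ^ 2 / (2 * m)) : ℝ) : ℂ))
        ^ ((m : ℂ) - 1 / 2)
      = Complex.exp (((θ : ℂ) * Complex.I) * ((m : ℂ) - 1 / 2)) := by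
    rw [Complex.cpow_def_of_ne_zero hne, hbase, Complex.log_exp hθmem.1 hθmem.2]
  rw [hpow, ← Complex.exp_add, ← Complex.exp_add]
  congr 1
  push_cast
  ring

lemma aux_eps (e s : ℝ) (h0 : 0 < e) (hle : e ≤ 1/2) (hs2 : s ^ 2 = 2) (hs1 : 1 ≤ s) :
    (s - e) ^ 2 ≤ 2 - e := by nlinarith

lemma aux_div_diff (x a b N : ℝ) (hN : 1 ≤ N) (ha2 : a ^ 2 = 2 * N) (hb2 : b ^ 2 = 2 * N + 2)
    (ha0 : 0 < a) (hb0 : 0 < b) (hba : a ≤ b) (hxa : |x| ≤ a) :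
    |x / b - x / a| ≤ 1 / (2 * N) := by
  have hid : x / b - x / a = x * (a - b) / (a * b) := by field_simp
  rw [hid, abs_div, abs_of_pos (mul_pos ha0 hb0), abs_mul,
    abs_of_nonpos (sub_nonpos.2 hba),
    div_le_div_iff₀ (mul_pos ha0 hb0) (by linarith : (0:ℝ) < 2 * N)]
  have hprod : (b - a) * (b + a) = 2 := by nlinarith
  have hx0 : 0 ≤ |x| := abs_nonneg x
  have h1 : |x| * (b - a) ≤ a * (b - a) :=
    mul_le_mul_of_nonneg_right hxa (by linarith)
  nlinarith [mul_le_mul_of_nonneg_right h1 (by linarith : (0:ℝ) ≤ 2 * N),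
    mul_pos ha0 hb0, mul_le_mul_of_nonneg_left hba ha0.le]

lemma aux_core (K N Δ y D : ℝ) (hN : 1 ≤ N) (hK0 : 0 < K)
    (hD2 : D ^ 2 = (2 * N) * (2 * N + 2)) (hD0 : 0 < D)
    (hΔ : |Δ| ≤ K / (2 * N)) (hsinval : Real.sin Δ = y / D)
    (hy : |y| ≤ K) :
    |(N + 1/2) * Δ - y / 2| ≤ (K ^ 3 + K) / N := by
  have hN0 : (0:ℝ) < N := by linarith
  have hDge : 2 * N ≤ D := by nlinarith
  have hgap0 : 0 ≤ 2 * N + 1 - D := by nlinarith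
  have hgap : 2 * N + 1 - D ≤ 1 / (4 * N) := by
    rw [le_div_iff₀ (by linarith : (0:ℝ) < 4 * N)]
    nlinarith
  have hid : (N + 1/2) * Δ - y / 2
      = (N + 1/2) * (Δ - Real.sin Δ) + y * ((2 * N + 1 - D) / (2 * D)) := by
    rw [hsinval]; field_simp; ring
  rw [hid, le_div_iff₀ hN0]
  have tri : |(N + 1/2) * (Δ - Real.sin Δ) + y * ((2 * N + 1 - D) / (2 * D))|
      ≤ (N + 1/2) * |Δ - Real.sin Δ| + |y| * ((2 * N + 1 - D) / (2 * D)) := by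
    have := abs_add_le ((N + 1/2) * (Δ - Real.sin Δ)) (y * ((2 * N + 1 - D) / (2 * D)))
    rw [abs_mul, abs_mul, abs_of_pos (by linarith : (0:ℝ) < N + 1/2),
      abs_of_nonneg (div_nonneg hgap0 (by linarith))] at this
    exact this
  -- piece 1
  have hΔ' : |Δ| * (2 * N) ≤ K := (le_div_iff₀ (by linarith : (0:ℝ) < 2 * N)).1 hΔ
  have h8 : 8 * N ^ 3 * |Δ| ^ 3 ≤ K ^ 3 := by
    have := pow_le_pow_left₀ (by positivity) hΔ' 3
    nlinarith [this]
  have habs3 := aux_sub_sin Δ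
  have p1 : ((N + 1/2) * |Δ - Real.sin Δ|) * N ≤ K ^ 3 := by
    have hnn : (0:ℝ) ≤ |Δ - Real.sin Δ| := abs_nonneg _
    have e0 : (N + 1/2) * N ≤ 2 * N ^ 2 := by nlinarith
    have e1 : ((N + 1/2) * |Δ - Real.sin Δ|) * N ≤ 2 * N ^ 2 * (2 * |Δ| ^ 3) := by
      have h := mul_le_mul e0 habs3 hnn (by positivity : (0:ℝ) ≤ 2 * N ^ 2)
      calc ((N + 1/2) * |Δ - Real.sin Δ|) * N = ((N + 1/2) * N) * |Δ - Real.sin Δ| := by ring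
      _ ≤ 2 * N ^ 2 * (2 * |Δ| ^ 3) := h
    have e2 : 2 * N ^ 2 * (2 * |Δ| ^ 3) ≤ K ^ 3 := by
      have ht : (0:ℝ) ≤ |Δ| ^ 3 := by positivity
      nlinarith [mul_nonneg (mul_nonneg (sq_nonneg N) ht) (by linarith : (0:ℝ) ≤ 2 * N - 1)]
    linarith
  -- piece 2
  have p2 : (|y| * ((2 * N + 1 - D) / (2 * D))) * N ≤ K := by
    have hq : (2 * N + 1 - D) / (2 * D) ≤ 1 / (4 * N) := by
      calc (2 * N + 1 - D) / (2 * D) ≤ (2 * N + 1 - D) / 1 :=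
            div_le_div_of_nonneg_left hgap0 one_pos (by linarith)
      _ = 2 * N + 1 - D := div_one _
      _ ≤ 1 / (4 * N) := hgap
    have h1 : |y| * ((2 * N + 1 - D) / (2 * D)) ≤ K * (1 / (4 * N)) :=
      mul_le_mul hy hq (by positivity) hK0.le
    have h2 : K * (1 / (4 * N)) * N = K / 4 := by field_simp
    nlinarith [mul_le_mul_of_nonneg_right h1 hN0.le]
  calc |(N + 1/2) * (Δ - Real.sin Δ) + y * ((2 * N + 1 - D) / (2 * D))| * N
      ≤ ((N + 1/2) * |Δ - Real.sin Δ| + |y| * ((2 * N + 1 - D) / (2 * D))) * N :=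
        mul_le_mul_of_nonneg_right tri hN0.le
    _ = ((N + 1/2) * |Δ - Real.sin Δ|) * N + (|y| * ((2 * N + 1 - D) / (2 * D))) * N := by ring
    _ ≤ K ^ 3 + K := add_le_add p1 p2

/-- **Consecutive Plancherel–Rotach phases.**  Let `Φ x m` be the Plancherel–Rotach
phase.  For every `ε > 0` there is `C` such that for all `n ≥ 1` and all `x` with
`|x| ≤ (√2 - ε)√n`,
`|Φ x (n+1) / Φ x n - (x + i√(2n - x²)) / √(2n)| ≤ C / n`. -/
theorem consecutive_plancherel_rotach_phases
    (Φ : ℝ → ℕ → ℂ)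
    (hΦ : ∀ x (m : ℕ), Φ x m = Complex.exp (Complex.I * (π : ℂ) / 4) *
      (((x / Real.sqrt (2 * m) : ℝ) : ℂ) +
          Complex.I * ((Real.sqrt (1 - x ^ 2 / (2 * m)) : ℝ) : ℂ)) ^ ((m : ℂ) - 1 / 2) *
      Complex.exp (-(Complex.I / 2) * (x : ℂ) * ((Real.sqrt (2 * m - x ^ 2) : ℝ) : ℂ)))
    (ε : ℝ) (hε : 0 < ε) :
    ∃ C : ℝ, ∀ n : ℕ, 1 ≤ n → ∀ x : ℝ,
      |x| ≤ (Real.sqrt 2 - ε) * Real.sqrt n →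
      ‖Φ x (n + 1) / Φ x n -
          ((x : ℂ) + Complex.I * ((Real.sqrt (2 * n - x ^ 2) : ℝ) : ℂ)) /
            ((Real.sqrt (2 * n) : ℝ) : ℂ)‖ ≤ C / n := by
  set ε' : ℝ := min ε (1/2) with hε'def
  have hε'0 : 0 < ε' := lt_min hε (by norm_num)
  have hε'le : ε' ≤ 1/2 := min_le_right _ _
  have hε'ε : ε' ≤ ε := min_le_left _ _
  set K : ℝ := Real.sqrt (2 / ε') with hKdef
  have hK0 : 0 < K := Real.sqrt_pos.2 (by positivity)
  refine ⟨2 * (K ^ 3 + K), ?_⟩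
  intro n hn x hx
  set N : ℝ := (n : ℝ) with hNdef
  have hN : 1 ≤ N := by rw [hNdef]; exact_mod_cast hn
  have hN0 : (0:ℝ) < N := by linarith
  have hsqrt2 : Real.sqrt 2 ^ 2 = 2 := Real.sq_sqrt (by norm_num)
  have hsqrt2ge : 1 ≤ Real.sqrt 2 := by
    have h := Real.sqrt_le_sqrt (show (1:ℝ) ≤ 2 by norm_num)
    rwa [Real.sqrt_one] at h
  have hx' : |x| ≤ (Real.sqrt 2 - ε') * Real.sqrt N := by
    refine le_trans hx (mul_le_mul_of_nonneg_right (by linarith) (Real.sqrt_nonneg _))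
  have hsN : Real.sqrt N ^ 2 = N := Real.sq_sqrt hN0.le
  have hεN : 0 < ε' * N := mul_pos hε'0 hN0
  -- x² ≤ 2N − ε'N
  have hF1 : x ^ 2 ≤ 2 * N - ε' * N := by
    have h1 : x ^ 2 ≤ ((Real.sqrt 2 - ε') * Real.sqrt N) ^ 2 := by
      rw [← sq_abs]
      exact pow_le_pow_left₀ (abs_nonneg x) hx' 2
    have h2 : ((Real.sqrt 2 - ε') * Real.sqrt N) ^ 2 = (Real.sqrt 2 - ε') ^ 2 * N := by
      rw [mul_pow, hsN]
    have hkey := aux_eps ε' (Real.sqrt 2) hε'0 hε'le hsqrt2 hsqrt2ge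
    have h3 := mul_le_mul_of_nonneg_right hkey hN0.le
    have h4 : (2 - ε') * N = 2 * N - ε' * N := by ring
    linarith
  have hx2m : x ^ 2 < 2 * N := by linarith
  -- quantities
  set a : ℝ := Real.sqrt (2 * N) with hadef
  set b : ℝ := Real.sqrt (2 * N + 2) with hbdef
  set s₁ : ℝ := Real.sqrt (2 * N - x ^ 2) with hs1def
  set s₂ : ℝ := Real.sqrt (2 * N + 2 - x ^ 2) with hs2def
  have ha2 : a ^ 2 = 2 * N := Real.sq_sqrt (by linarith)
  have hb2 : b ^ 2 = 2 * N + 2 := Real.sq_sqrt (by linarith)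
  have hs12 : s₁ ^ 2 = 2 * N - x ^ 2 := Real.sq_sqrt (by linarith)
  have hs22 : s₂ ^ 2 = 2 * N + 2 - x ^ 2 := Real.sq_sqrt (by linarith)
  have ha0 : 0 < a := Real.sqrt_pos.2 (by linarith)
  have hb0 : 0 < b := Real.sqrt_pos.2 (by linarith)
  have hba : a ≤ b := Real.sqrt_le_sqrt (by linarith)
  set E : ℝ := Real.sqrt (ε' * N) with hEdef
  have hE2 : E ^ 2 = ε' * N := Real.sq_sqrt hεN.le
  have hE0 : 0 < E := Real.sqrt_pos.2 hεN
  have hs1E : E ≤ s₁ := by rw [hEdef, hs1def]; exact Real.sqrt_le_sqrt (by linarith)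
  have hs2E : E ≤ s₂ := by rw [hEdef, hs2def]; exact Real.sqrt_le_sqrt (by linarith)
  have hs10 : 0 < s₁ := lt_of_lt_of_le hE0 hs1E
  have hs20 : 0 < s₂ := lt_of_lt_of_le hE0 hs2E
  have hxa : |x| ≤ a := by
    rw [hadef, ← Real.sqrt_sq_eq_abs]
    exact Real.sqrt_le_sqrt (by linarith)
  have hKE : K * E = a := by
    rw [hKdef, hEdef, hadef, ← Real.sqrt_mul (by positivity)]
    congr 1
    field_simp
  -- angles
  set θ₁ : ℝ := Real.arccos (x / a) with hθ1def
  set θ₂ : ℝ := Real.arccos (x / b) with hθ2def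
  set c₂ : ℝ := Real.sqrt (1 - ε' / 2) with hc2def
  have hc22 : c₂ ^ 2 = 1 - ε' / 2 := Real.sq_sqrt (by linarith)
  have hc20 : 0 ≤ c₂ := Real.sqrt_nonneg _
  have hc2lt : c₂ < 1 := by
    have h := Real.sqrt_lt_sqrt (show (0:ℝ) ≤ 1 - ε' / 2 by linarith)
      (show 1 - ε' / 2 < 1 by linarith)
    rwa [Real.sqrt_one] at h
  have hxau : |x / a| ≤ c₂ := by
    rw [← Real.sqrt_sq_eq_abs, hc2def]
    apply Real.sqrt_le_sqrt
    rw [div_pow, ha2, div_le_iff₀ (by linarith)]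
    have : (1 - ε' / 2) * (2 * N) = 2 * N - ε' * N := by ring
    linarith
  have hxbu : |x / b| ≤ c₂ := by
    rw [← Real.sqrt_sq_eq_abs, hc2def]
    apply Real.sqrt_le_sqrt
    rw [div_pow, hb2, div_le_iff₀ (by linarith)]
    have h4 : (1 - ε' / 2) * (2 * N + 2) = 2 * N + 2 - ε' * N - ε' := by ring
    linarith
  have hLip : 1 / Real.sqrt (1 - c₂ ^ 2) = K := by
    rw [hc22, show (1 : ℝ) - (1 - ε' / 2) = ε' / 2 by ring, hKdef, one_div, ← Real.sqrt_inv,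
      inv_div]
  -- |θ₂ − θ₁| ≤ K/(2N)
  have hΔbound : |θ₂ - θ₁| ≤ K / (2 * N) := by
    have h1 := aux_arccos_lip hc2lt hxbu hxau
    rw [hLip] at h1
    have h2 := aux_div_diff x a b N hN ha2 hb2 ha0 hb0 hba hxa
    calc |θ₂ - θ₁| ≤ K * |x / b - x / a| := h1
    _ ≤ K * (1 / (2 * N)) := mul_le_mul_of_nonneg_left h2 hK0.le
    _ = K / (2 * N) := by ring
  -- trig values
  have hxa1 : -1 ≤ x / a ∧ x / a ≤ 1 := abs_le.1 (hxau.trans hc2lt.le)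
  have hxb1 : -1 ≤ x / b ∧ x / b ≤ 1 := abs_le.1 (hxbu.trans hc2lt.le)
  have hcos1 : Real.cos θ₁ = x / a := Real.cos_arccos hxa1.1 hxa1.2
  have hcos2 : Real.cos θ₂ = x / b := Real.cos_arccos hxb1.1 hxb1.2
  have hsin1 : Real.sin θ₁ = s₁ / a := by
    rw [hθ1def, Real.sin_arccos, div_pow, ha2, hs1def, hadef,
      show 1 - x ^ 2 / (2 * N) = (2 * N - x ^ 2) / (2 * N) by field_simp,
      Real.sqrt_div (by linarith)]
  have hsin2 : Real.sin θ₂ = s₂ / b := by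
    rw [hθ2def, Real.sin_arccos, div_pow, hb2, hs2def, hbdef,
      show 1 - x ^ 2 / (2 * N + 2) = (2 * N + 2 - x ^ 2) / (2 * N + 2) by field_simp,
      Real.sqrt_div (by linarith)]
  have hsinΔ : Real.sin (θ₂ - θ₁) = x * (s₂ - s₁) / (a * b) := by
    rw [Real.sin_sub, hsin1, hsin2, hcos1, hcos2]
    field_simp
  -- s₂ − s₁ = 2/(s₁+s₂)
  have hssq : s₂ ^ 2 - s₁ ^ 2 = 2 := by rw [hs22, hs12]; ring
  have hsum0 : 0 < s₁ + s₂ := by linarith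
  have hs21 : s₂ - s₁ = 2 / (s₁ + s₂) := by
    rw [eq_div_iff hsum0.ne']
    linear_combination hssq
  have hs210 : 0 ≤ s₂ - s₁ := by rw [hs21]; positivity
  -- |y| ≤ K
  have hy : |x * (s₂ - s₁)| ≤ K := by
    rw [abs_mul, abs_of_nonneg hs210]
    have h2a : 2 / (s₁ + s₂) ≤ 2 / (2 * E) :=
      div_le_div_of_nonneg_left (by norm_num) (by linarith) (by linarith)
    have h3 : |x| * (s₂ - s₁) ≤ a * (2 / (2 * E)) := by
      rw [hs21]
      exact mul_le_mul hxa h2a (by positivity) ha0.le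
    have h4 : a * (2 / (2 * E)) = K := by
      rw [← hKE]; field_simp
    linarith
  -- core estimate
  have hD2 : (a * b) ^ 2 = (2 * N) * (2 * N + 2) := by rw [mul_pow, ha2, hb2]
  have hcore := aux_core K N (θ₂ - θ₁) (x * (s₂ - s₁)) (a * b) hN hK0 hD2
    (mul_pos ha0 hb0) hΔbound hsinΔ hy
  -- complex representation
  have e1 : Φ x n = Complex.exp (Complex.I *
      ((π / 4 + (N - 1 / 2) * θ₁ - x * s₁ / 2 : ℝ) : ℂ)) :=
    (hΦ x n).trans (aux_phi_eq x n hn hx2m)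
  have hcast : ((n + 1 : ℕ) : ℝ) = N + 1 := by rw [hNdef]; push_cast; ring
  have e2 : Φ x (n + 1) = Complex.exp (Complex.I *
      ((π / 4 + ((N + 1) - 1 / 2) * θ₂ - x * s₂ / 2 : ℝ) : ℂ)) := by
    have h := aux_phi_eq x (n + 1) (by omega) (by rw [hcast]; linarith)
    have h2 := hΦ x (n + 1)
    rw [hcast, show 2 * (N + 1) = 2 * N + 2 by ring] at h h2
    exact h2.trans h
  have hratio : Φ x (n + 1) / Φ x n = Complex.exp (Complex.I *
      (((π / 4 + ((N + 1) - 1 / 2) * θ₂ - x * s₂ / 2)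
        - (π / 4 + (N - 1 / 2) * θ₁ - x * s₁ / 2) : ℝ) : ℂ)) := by
    rw [e1, e2, ← Complex.exp_sub]
    congr 1
    push_cast
    ring
  have htarget : ((x : ℂ) + Complex.I * ((s₁ : ℝ) : ℂ)) / ((a : ℝ) : ℂ)
      = Complex.exp (Complex.I * ((θ₁ : ℝ) : ℂ)) := by
    rw [show Complex.I * ((θ₁ : ℝ) : ℂ) = ((θ₁ : ℝ) : ℂ) * Complex.I by ring,
      Complex.exp_mul_I, ← Complex.ofReal_cos, ← Complex.ofReal_sin, hcos1, hsin1]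
    have haC : ((a : ℝ) : ℂ) ≠ 0 := by exact_mod_cast ha0.ne'
    field_simp
    push_cast
    field_simp
  -- final bound
  have hmain := aux_exp_dist
    ((π / 4 + ((N + 1) - 1 / 2) * θ₂ - x * s₂ / 2) - (π / 4 + (N - 1 / 2) * θ₁ - x * s₁ / 2))
    θ₁
  have hGeq : ((π / 4 + ((N + 1) - 1 / 2) * θ₂ - x * s₂ / 2)
      - (π / 4 + (N - 1 / 2) * θ₁ - x * s₁ / 2)) - θ₁
      = (N + 1 / 2) * (θ₂ - θ₁) - (x * (s₂ - s₁)) / 2 := by ring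
  show ‖Φ x (n + 1) / Φ x n -
      ((x : ℂ) + Complex.I * ((s₁ : ℝ) : ℂ)) / ((a : ℝ) : ℂ)‖ ≤ 2 * (K ^ 3 + K) / N
  rw [hratio, htarget]
  calc ‖Complex.exp (Complex.I *
        (((π / 4 + ((N + 1) - 1 / 2) * θ₂ - x * s₂ / 2)
          - (π / 4 + (N - 1 / 2) * θ₁ - x * s₁ / 2) : ℝ) : ℂ))
      - Complex.exp (Complex.I * ((θ₁ : ℝ) : ℂ))‖
      ≤ 2 * |((π / 4 + ((N + 1) - 1 / 2) * θ₂ - x * s₂ / 2)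
          - (π / 4 + (N - 1 / 2) * θ₁ - x * s₁ / 2)) - θ₁| := hmain
    _ = 2 * |(N + 1 / 2) * (θ₂ - θ₁) - (x * (s₂ - s₁)) / 2| := by rw [hGeq]
    _ ≤ 2 * ((K ^ 3 + K) / N) := by linarith
    _ = 2 * (K ^ 3 + K) / N := by ring
end
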